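/- The generating function K(x) counting by semilength the Dyck paths avoiding UUU and DUD at height h>0 and having no occurrence of the factor UD at height 0 satisfies K(x) = 1 + x(A*(x) − 1 + x·A*(x))·K(x), where A*(x) is the generating function of Dyck paths avoiding UUU and DUD that start with UUD (or are empty). -/

import Mathlib

/-- Every prefix of the path has nonnegative sum (the path stays weakly above the x-axis). -/
def NonnegPrefixes (w : List ℤ) : Prop := ∀ p ∈ w.inits, 0 ≤ p.sum

/-- A Dyck word: steps U = 1 and D = -1, nonnegative prefixes, ending at height 0. -/
def IsDyckWord (w : List ℤ) : Prop :=
  (∀ s ∈ w, s = 1 ∨ s = -1) ∧ NonnegPrefixes w ∧ w.sum = 0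

/-- A Motzkin path: steps U = 1, F = 0, D = -1, nonnegative prefixes, ending at height 0. -/
def IsMotzkinWord (w : List ℤ) : Prop :=
  (∀ s ∈ w, s = 1 ∨ s = 0 ∨ s = -1) ∧ NonnegPrefixes w ∧ w.sum = 0

/-- A Dyck meander with catastrophes: steps U = 1, D = -1, D_i = -i (i ≥ 2),
nonnegative, and every catastrophe step D_i (i ≥ 2) lands exactly at height 0. -/
def IsDyckMeanderCat (w : List ℤ) : Prop :=
  (∀ s ∈ w, s = 1 ∨ s ≤ -1) ∧ NonnegPrefixes w ∧
    ∀ i, i < w.length → w.getD i 0 ≤ -2 → (w.take (i+1)).sum = 0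

/-- A Motzkin meander with catastrophes: steps U = 1, F = 0, D = -1, D_i = -i (i ≥ 2),
nonnegative, every catastrophe landing exactly at height 0. -/
def IsMotzkinMeanderCat (w : List ℤ) : Prop :=
  (∀ s ∈ w, s ≤ 1) ∧ NonnegPrefixes w ∧
    ∀ i, i < w.length → w.getD i 0 ≤ -2 → (w.take (i+1)).sum = 0

def IsDyckExcursionCat (w : List ℤ) : Prop := IsDyckMeanderCat w ∧ w.sum = 0

def IsMotzkinExcursionCat (w : List ℤ) : Prop := IsMotzkinMeanderCat w ∧ w.sum = 0

/-- The factor `pat` occurs in `w` starting at position `i`. -/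
def OccursAt (pat w : List ℤ) (i : ℕ) : Prop := pat <+: w.drop i

/-- `w` has no occurrence of the factor `pat`. -/
def Avoids (pat w : List ℤ) : Prop := ∀ i, ¬ OccursAt pat w i

/-- `w` has no occurrence of `pat` starting at height h > 0. -/
def AvoidsAtPosHeight (pat w : List ℤ) : Prop :=
  ∀ i, OccursAt pat w i → (w.take i).sum ≤ 0

/-- `w` has no occurrence of `pat` starting at height h ≥ 2. -/
def AvoidsAtHeightGe2 (pat w : List ℤ) : Prop :=
  ∀ i, OccursAt pat w i → (w.take i).sum < 2

def pUUU : List ℤ := [1, 1, 1]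
def pDUD : List ℤ := [-1, 1, -1]
def pUUD : List ℤ := [1, 1, -1]
def pUD : List ℤ := [1, -1]
def pDU : List ℤ := [-1, 1]

namespace Stmt9


lemma nonneg_iff {w : List ℤ} : NonnegPrefixes w ↔ ∀ n, 0 ≤ (w.take n).sum := by
  constructor
  · intro h n; exact h _ ((List.mem_inits _ _).2 (List.take_prefix n w))
  · intro h p hp
    obtain ⟨t, rfl⟩ := (List.mem_inits _ _).1 hp
    have := h p.length
    rwa [List.take_append_of_le_length le_rfl, List.take_length] at this

/-- parity: a ±1 word has length ≡ sum mod 2 -/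
lemma even_length {w : List ℤ} (hs : ∀ s ∈ w, s = 1 ∨ s = -1) (h0 : w.sum = 0) :
    ∃ m, w.length = 2 * m := by
  suffices h : (2:ℤ) ∣ (w.length : ℤ) - w.sum by
    rw [h0, sub_zero] at h
    obtain ⟨m, hm⟩ := h
    exact ⟨m.toNat, by omega⟩
  clear h0
  induction w with
  | nil => simp
  | cons a l ih =>
    have ha := hs a (by simp)
    have := ih (fun s hsl => hs s (by simp [hsl]))
    simp only [List.length_cons, List.sum_cons]
    push_cast
    rcases ha with rfl | rfl <;> omega

/-- nonempty Dyck word starts with 1 -/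
lemma head_eq_one {w : List ℤ} (hw : IsDyckWord w) (hne : w ≠ []) :
    ∃ t, w = 1 :: t := by
  obtain ⟨a, t, rfl⟩ := List.exists_cons_of_ne_nil hne
  rcases hw.1 a (by simp) with rfl | rfl
  · exact ⟨t, rfl⟩
  · exfalso
    have := nonneg_iff.1 hw.2.1 1
    simp at this

/-- nonempty Dyck word ends with -1, i.e. its last element is -1 -/
lemma getLast_eq {w : List ℤ} (hw : IsDyckWord w) (hne : w ≠ []) (h : w.length - 1 < w.length) :
    w[w.length - 1] = -1 := by
  have hlen : 1 ≤ w.length := List.length_pos_iff.2 hne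
  have h1 : (w.take (w.length - 1)).sum + (w.drop (w.length - 1)).sum = 0 := by
    rw [List.sum_take_add_sum_drop]; exact hw.2.2
  have h2 : 0 ≤ (w.take (w.length - 1)).sum := nonneg_iff.1 hw.2.1 _
  have h3 : w.drop (w.length - 1) = [w[w.length - 1]] := by
    apply List.ext_getElem
    · simp; omega
    · intro i h1 h2
      have hi : i = 0 := by simpa using h2
      subst hi
      simp
  rw [h3] at h1
  simp at h1
  rcases hw.1 _ (List.getElem_mem h) with he | he
  · omega
  · exact he


section S2sec

section
variable (α β : List ℤ)

local notation "w" => ((1:ℤ) :: α ++ (-1:ℤ) :: β)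

lemma len_w : (w).length = α.length + β.length + 2 := by simp; omega

lemma drop_mid {q : ℕ} (h : q ≤ α.length) : (w).drop (q+1) = α.drop q ++ (-1:ℤ) :: β := by
  rw [List.cons_append, List.drop_succ_cons, List.drop_append_of_le_length h]

lemma drop_right (q : ℕ) : (w).drop (α.length + 2 + q) = β.drop q := by
  have : α.length + 2 + q = (1 :: α ++ [(-1:ℤ)]).length + q := by simp
  rw [this]
  rw [show w = (1 :: α ++ [(-1:ℤ)]) ++ β by simp]
  rw [List.drop_length_add_append]

lemma take_mid {q : ℕ} (h : q ≤ α.length) : (w).take (q+1) = (1:ℤ) :: α.take q := by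
  rw [List.cons_append, List.take_succ_cons, List.take_append_of_le_length h]

lemma sum_take_mid {q : ℕ} (h : q ≤ α.length) :
    ((w).take (q+1)).sum = 1 + (α.take q).sum := by
  rw [take_mid _ _ h]; simp

lemma sum_take_right (hα : α.sum = 0) (q : ℕ) :
    ((w).take (α.length + 2 + q)).sum = (β.take q).sum := by
  have h1 : ((w).take (α.length + 2 + q)).sum + ((w).drop (α.length + 2 + q)).sum = (w).sum :=
    List.sum_take_add_sum_drop _ _
  rw [drop_right] at h1
  have h2 : ((β.take q).sum + (β.drop q).sum) = β.sum := List.sum_take_add_sum_drop _ _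
  have h3 : (w).sum = β.sum := by simp [hα]
  omega

lemma getElem_close (h : α.length + 1 < (w).length) : (w)[α.length + 1] = -1 := by
  rw [List.getElem_append_right (by simp : ((1:ℤ)::α).length ≤ α.length+1)]
  simp

end

lemma occ_getElem {pat l : List ℤ} {i t : ℕ} (h : OccursAt pat l i) (ht : t < pat.length)
    (hb : i + t < l.length) : pat[t] = l[i + t] := by
  have := h.getElem ht
  rwa [List.getElem_drop] at this

lemma occ_mem_mid {pat α β : List ℤ} {j : ℕ} (h : OccursAt pat α j) :
    OccursAt pat ((1:ℤ) :: α ++ (-1:ℤ) :: β) (j+1) := by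
  unfold OccursAt at *
  by_cases hj : j ≤ α.length
  · rw [drop_mid _ _ hj]
    exact h.trans (List.prefix_append _ _)
  · rw [List.drop_eq_nil_of_le (by omega)] at h
    rw [List.prefix_nil] at h
    subst h
    exact List.nil_prefix

lemma occ_mem_right {pat α β : List ℤ} {j : ℕ} (h : OccursAt pat β j) :
    OccursAt pat ((1:ℤ) :: α ++ (-1:ℤ) :: β) (α.length + 2 + j) := by
  unfold OccursAt at *
  rwa [drop_right]

/-- extract occurrence in α from occurrence in w in the middle zone -/
lemma occ_extract_mid {pat α β : List ℤ} {i : ℕ} (h : OccursAt pat ((1:ℤ) :: α ++ (-1:ℤ) :: β) i)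
    (h1 : 1 ≤ i) (h2 : i + pat.length ≤ α.length + 1) : OccursAt pat α (i-1) := by
  unfold OccursAt at *
  obtain ⟨q, rfl⟩ : ∃ q, i = q + 1 := ⟨i - 1, by omega⟩
  rw [drop_mid _ _ (by omega)] at h
  simp only [Nat.add_sub_cancel]
  rw [List.prefix_iff_eq_take] at h ⊢
  rw [List.take_append_of_le_length (by simp; omega)] at h
  exact h

lemma occ_extract_right {pat α β : List ℤ} {i : ℕ}
    (h : OccursAt pat ((1:ℤ) :: α ++ (-1:ℤ) :: β) i) (h1 : α.length + 2 ≤ i) :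
    OccursAt pat β (i - (α.length + 2)) := by
  unfold OccursAt at *
  obtain ⟨q, rfl⟩ : ∃ q, i = α.length + 2 + q := ⟨i - (α.length+2), by omega⟩
  rw [drop_right] at h
  simpa using h


lemma getD_add (l : List ℤ) (n q : ℕ) : l.getD (n + q) 0 = (l.drop n).getD q 0 := by
  simp [List.getD_eq_getElem?_getD, List.getElem?_drop]

lemma occ_getD {pat l : List ℤ} {i t : ℕ} (h : OccursAt pat l i) (ht : t < pat.length)
    (hb : i + t < l.length) : pat.getD t 0 = l.getD (i + t) 0 := by
  rw [List.getD_eq_getElem _ _ ht, List.getD_eq_getElem _ _ hb]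
  exact occ_getElem h ht hb

lemma getD_close (α β : List ℤ) : ((1:ℤ) :: α ++ (-1:ℤ) :: β).getD (α.length + 1) 0 = -1 := by
  have hb : α.length + 1 < ((1:ℤ) :: α ++ (-1:ℤ) :: β).length := by rw [len_w]; omega
  rw [List.getD_eq_getElem _ _ hb]
  exact getElem_close α β hb

lemma getD_right (α β : List ℤ) (q : ℕ) :
    ((1:ℤ) :: α ++ (-1:ℤ) :: β).getD (α.length + 2 + q) 0 = β.getD q 0 := by
  rw [getD_add]
  have h := drop_right α β 0
  simp only [Nat.add_zero, List.drop_zero] at h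
  rw [h]

lemma getD_mid (α β : List ℤ) {q : ℕ} (hq : q < α.length) :
    ((1:ℤ) :: α ++ (-1:ℤ) :: β).getD (q + 1) 0 = α.getD q 0 := by
  rw [show q + 1 = 1 + q by omega, getD_add]
  have hd : ((1:ℤ) :: α ++ (-1:ℤ) :: β).drop 1 = α ++ (-1:ℤ) :: β := by
    have := drop_mid α β (show 0 ≤ α.length by omega)
    simpa using this

  rw [hd]
  rw [List.getD_eq_getElem _ _ (by simp; omega), List.getD_eq_getElem _ _ hq]
  exact List.getElem_append_left hq

end S2sec



def PK (w : List ℤ) : Prop :=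
  IsDyckWord w ∧ AvoidsAtPosHeight pUUU w ∧ AvoidsAtPosHeight pDUD w ∧
    ∀ i, OccursAt pUD w i → (w.take i).sum ≠ 0

def PA (w : List ℤ) : Prop :=
  IsDyckWord w ∧ Avoids pUUU w ∧ Avoids pDUD w ∧ (w = [] ∨ pUUD <+: w)

def PB (w : List ℤ) : Prop :=
  IsDyckWord w ∧ Avoids pUUU w ∧ Avoids pDUD w ∧ w ≠ []

lemma prefix_two {a b : ℤ} {l : List ℤ} (h2 : 2 ≤ l.length) (h0 : l.getD 0 0 = a)
    (h1 : l.getD 1 0 = b) : [a, b] <+: l := by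
  rcases l with _ | ⟨x, t⟩
  · simp at h2
  rcases t with _ | ⟨y, t'⟩
  · simp at h2
  simp only [List.getD_cons_zero, List.getD_cons_succ] at h0 h1
  subst h0; subst h1
  exact ⟨t', rfl⟩

lemma getD_last {α : List ℤ} (hα : IsDyckWord α) (hne : α ≠ []) :
    α.getD (α.length - 1) 0 = -1 := by
  have h : α.length - 1 < α.length := by
    have := List.length_pos_iff.2 hne; omega
  rw [List.getD_eq_getElem _ _ h]
  exact getLast_eq hα hne h

lemma sub_nonneg_height {α β : List ℤ} (hα : NonnegPrefixes α) {i : ℕ} (h1 : 1 ≤ i)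
    (h2 : i ≤ α.length + 1) : 1 ≤ (((1:ℤ) :: α ++ (-1:ℤ) :: β).take i).sum := by
  obtain ⟨q, rfl⟩ : ∃ q, i = q + 1 := ⟨i - 1, by omega⟩
  rw [sum_take_mid α β (by omega)]
  have := nonneg_iff.1 hα q
  omega

lemma compose_PK {α β : List ℤ} (hα : PB α) (hβ : PK β) : PK ((1:ℤ) :: α ++ (-1:ℤ) :: β) := by
  obtain ⟨⟨hαs, hαn, hαz⟩, hαU, hαD, hαne⟩ := hα
  obtain ⟨⟨hβs, hβn, hβz⟩, hβU, hβD, hβUD⟩ := hβ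
  have hlen := len_w α β
  have hαpos : 1 ≤ α.length := List.length_pos_iff.2 hαne
  have hmid : ∀ i, 1 ≤ i → i ≤ α.length + 1 →
      1 ≤ (((1:ℤ) :: α ++ (-1:ℤ) :: β).take i).sum := fun i h1 h2 =>
    sub_nonneg_height hαn h1 h2
  have hright : ∀ i, α.length + 2 ≤ i →
      (((1:ℤ) :: α ++ (-1:ℤ) :: β).take i).sum = (β.take (i - (α.length + 2))).sum := by
    intro i hi
    obtain ⟨q, rfl⟩ : ∃ q, i = α.length + 2 + q := ⟨i - (α.length + 2), by omega⟩
    rw [sum_take_right α β hαz, Nat.add_sub_cancel_left]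
  have hdyck : IsDyckWord ((1:ℤ) :: α ++ (-1:ℤ) :: β) := by
    refine ⟨?_, ?_, ?_⟩
    · intro s hs
      simp only [List.cons_append, List.mem_cons, List.mem_append] at hs
      rcases hs with rfl | hs | rfl | hs
      · exact Or.inl rfl
      · exact hαs s hs
      · exact Or.inr rfl
      · exact hβs s hs
    · rw [nonneg_iff]
      intro p
      rcases Nat.eq_zero_or_pos p with rfl | hp
      · simp
      rcases le_or_gt p (α.length + 1) with h | h
      · have := hmid p hp h; omega
      · rw [hright p (by omega)]
        exact nonneg_iff.1 hβn _
    · simp [hαz, hβz]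
  have hUUU : AvoidsAtPosHeight pUUU ((1:ℤ) :: α ++ (-1:ℤ) :: β) := by
    intro i hi
    by_contra hpos
    push_neg at hpos
    have hplen : pUUU.length = 3 := rfl
    have hilen : i + 3 ≤ α.length + β.length + 2 := by
      have := hi.length_le
      simp only [List.length_drop, hlen, hplen] at this
      omega
    have hcases : i = 0 ∨ (1 ≤ i ∧ i + 3 ≤ α.length + 1) ∨
        (∃ t, t < 3 ∧ i + t = α.length + 1) ∨ α.length + 2 ≤ i := by
      by_cases h0 : i = 0
      · exact Or.inl h0
      by_cases h1 : i + 3 ≤ α.length + 1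
      · exact Or.inr (Or.inl ⟨by omega, h1⟩)
      by_cases h2 : α.length + 2 ≤ i
      · exact Or.inr (Or.inr (Or.inr h2))
      · exact Or.inr (Or.inr (Or.inl ⟨α.length + 1 - i, by omega, by omega⟩))
    rcases hcases with rfl | ⟨h1, h2⟩ | ⟨t, ht, hit⟩ | h1
    · simp at hpos
    · exact hαU (i-1) (occ_extract_mid hi h1 (by rw [hplen]; omega))
    · have hval := occ_getD (t := t) hi (by omega) (by omega)
      rw [hit, getD_close α β] at hval
      interval_cases t <;> simp [pUUU] at hval
    · have hocc := occ_extract_right hi h1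
      have := hβU _ hocc
      rw [hright i h1] at hpos
      omega
  have hDUD : AvoidsAtPosHeight pDUD ((1:ℤ) :: α ++ (-1:ℤ) :: β) := by
    intro i hi
    by_contra hpos
    push_neg at hpos
    have hplen : pDUD.length = 3 := rfl
    have hilen : i + 3 ≤ α.length + β.length + 2 := by
      have := hi.length_le
      simp only [List.length_drop, hlen, hplen] at this
      omega
    have hcases : i = 0 ∨ (1 ≤ i ∧ i + 3 ≤ α.length + 1) ∨
        (∃ t, t < 3 ∧ i + t = α.length + 1) ∨ α.length + 2 ≤ i := by
      by_cases h0 : i = 0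
      · exact Or.inl h0
      by_cases h1 : i + 3 ≤ α.length + 1
      · exact Or.inr (Or.inl ⟨by omega, h1⟩)
      by_cases h2 : α.length + 2 ≤ i
      · exact Or.inr (Or.inr (Or.inr h2))
      · exact Or.inr (Or.inr (Or.inl ⟨α.length + 1 - i, by omega, by omega⟩))
    rcases hcases with rfl | ⟨h1, h2⟩ | ⟨t, ht, hit⟩ | h1
    · simp at hpos
    · exact hαD (i-1) (occ_extract_mid hi h1 (by rw [hplen]; omega))
    · interval_cases t
      · -- i = α.length + 1 : β would start with U D
        have hβ2 : 2 ≤ β.length := by omega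
        have he1 := occ_getD hi (show 1 < pDUD.length by omega) (by omega)
        have he2 := occ_getD hi (show 2 < pDUD.length by omega) (by omega)
        rw [show i + 1 = α.length + 2 + 0 by omega, getD_right] at he1
        rw [show i + 2 = α.length + 2 + 1 by omega, getD_right] at he2
        have hβ0 : β.getD 0 0 = 1 := by rw [← he1]; rfl
        have hβ1 : β.getD 1 0 = -1 := by rw [← he2]; rfl
        have hocc : OccursAt pUD β 0 := by
          unfold OccursAt
          rw [List.drop_zero]
          exact prefix_two hβ2 hβ0 hβ1
        have := hβUD 0 hocc
        simp at this
      · -- middle of pattern on the closing -1, pat[1] = 1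
        have he1 := occ_getD hi (show 1 < pDUD.length by omega) (by omega)
        rw [show i + 1 = α.length + 1 by omega, getD_close α β] at he1
        simp [pDUD] at he1
      · -- i + 2 = α.length + 1 : pat[1] against last letter of α
        have he1 := occ_getD hi (show 1 < pDUD.length by omega) (by omega)
        rw [show i + 1 = (α.length - 1) + 1 by omega, getD_mid α β (by omega)] at he1
        rw [getD_last ⟨hαs, hαn, hαz⟩ hαne] at he1
        simp [pDUD] at he1
    · have hocc := occ_extract_right hi h1
      have := hβD _ hocc
      rw [hright i h1] at hpos
      omega
  have hUD : ∀ i, OccursAt pUD ((1:ℤ) :: α ++ (-1:ℤ) :: β) i →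
      (((1:ℤ) :: α ++ (-1:ℤ) :: β).take i).sum ≠ 0 := by
    intro i hi h0
    have hplen : pUD.length = 2 := rfl
    have hilen : i + 2 ≤ α.length + β.length + 2 := by
      have := hi.length_le
      simp only [List.length_drop, hlen, hplen] at this
      omega
    rcases Nat.eq_zero_or_pos i with rfl | hp
    · have he1 := occ_getD hi (show 1 < pUD.length by omega) (by omega)
      rw [show (0:ℕ) + 1 = 0 + 1 by omega, getD_mid α β (by omega)] at he1
      obtain ⟨t, rfl⟩ := head_eq_one ⟨hαs, hαn, hαz⟩ hαne
      simp [pUD] at he1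
    rcases le_or_gt i (α.length + 1) with h | h
    · have := hmid i hp h; omega
    · have hocc := occ_extract_right hi (by omega)
      have := hβUD _ hocc
      rw [hright i (by omega)] at h0
      exact this h0
  exact ⟨hdyck, hUUU, hDUD, hUD⟩



lemma occ_cons2 {pat l : List ℤ} {a b : ℤ} {i : ℕ} :
    OccursAt pat (a :: b :: l) (i+2) ↔ OccursAt pat l i := by
  unfold OccursAt
  rw [show i + 2 = (i+1)+1 by omega, List.drop_succ_cons, List.drop_succ_cons]

/-- Dyck word of the form 1 :: -1 :: l from a Dyck word l -/
lemma dyck_UD_cons {l : List ℤ} (hl : IsDyckWord l) : IsDyckWord ((1:ℤ) :: -1 :: l) := by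
  obtain ⟨hs, hn, hz⟩ := hl
  refine ⟨?_, ?_, ?_⟩
  · intro s hs'
    rcases hs' with _ | ⟨_, hs'⟩
    · exact Or.inl rfl
    rcases hs' with _ | ⟨_, hs'⟩
    · exact Or.inr rfl
    · exact hs s hs'
  · rw [nonneg_iff]
    intro p
    match p with
    | 0 => simp
    | 1 => simp
    | (q+2) =>
      simp only [List.take_succ_cons, List.sum_cons]
      have := nonneg_iff.1 hn q
      omega
  · simp [hz]

/-- the A*-structure of nonempty Dyck words avoiding UUU and DUD -/
lemma PB_split {α : List ℤ} (hα : PB α) :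
    (PA α) ∨ ∃ α', α = (1:ℤ) :: -1 :: α' ∧ PA α' := by
  obtain ⟨hd, hU, hD, hne⟩ := hα
  obtain ⟨t, rfl⟩ := head_eq_one hd hne
  have htne : t ≠ [] := by
    rintro rfl
    simp [IsDyckWord] at hd
  rcases t with _ | ⟨a, t'⟩
  · exact absurd rfl htne
  rcases hd.1 a (by simp) with rfl | rfl
  · -- starts with UU, show UUD prefix
    left
    refine ⟨hd, hU, hD, Or.inr ?_⟩
    rcases t' with _ | ⟨b, t''⟩
    · exfalso; simp [IsDyckWord] at hd
    rcases hd.1 b (by simp) with rfl | rfl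
    · exact absurd ⟨t'', rfl⟩ (hU 0)
    · exact ⟨t'', rfl⟩
  · -- starts with UD
    right
    refine ⟨t', rfl, ?_, ?_, ?_, ?_⟩
    · -- t' is Dyck
      refine ⟨fun s hs => hd.1 s (by simp [hs]), ?_, ?_⟩
      · rw [nonneg_iff]
        intro q
        have := nonneg_iff.1 hd.2.1 (q+2)
        simp only [List.take_succ_cons, List.sum_cons] at this
        omega
      · have := hd.2.2
        simp at this
        omega
    · intro i hocc
      exact hU (i+2) (occ_cons2.2 hocc)
    · intro i hocc
      exact hD (i+2) (occ_cons2.2 hocc)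
    · -- t' = [] or starts with UUD
      by_cases ht' : t' = []
      · exact Or.inl ht'
      right
      have ht'd : IsDyckWord t' := by
        refine ⟨fun s hs => hd.1 s (by simp [hs]), ?_, ?_⟩
        · rw [nonneg_iff]
          intro q
          have := nonneg_iff.1 hd.2.1 (q+2)
          simp only [List.take_succ_cons, List.sum_cons] at this
          omega
        · have := hd.2.2
          simp at this
          omega
      obtain ⟨s, rfl⟩ := head_eq_one ht'd ht'
      have hsne : s ≠ [] := by
        rintro rfl
        simp [IsDyckWord] at ht'd
      rcases s with _ | ⟨c, s'⟩
      · exact absurd rfl hsne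
      rcases ht'd.1 c (by simp) with rfl | rfl
      · -- t' = 1 :: 1 :: s'
        rcases s' with _ | ⟨d, s''⟩
        · exfalso; simp [IsDyckWord] at ht'd
        rcases ht'd.1 d (by simp) with rfl | rfl
        · exact absurd ⟨s'', rfl⟩ (hU 2)
        · exact ⟨s'', rfl⟩
      · -- t' = 1 :: -1 :: s' gives DUD at position 1 of α
        exact absurd ⟨s', rfl⟩ (hD 1)

lemma PB_of_A1 {α : List ℤ} (hα : PA α) (hne : α ≠ []) : PB α :=
  ⟨hα.1, hα.2.1, hα.2.2.1, hne⟩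

lemma PB_of_UD {α' : List ℤ} (hα : PA α') : PB ((1:ℤ) :: -1 :: α') := by
  obtain ⟨hd, hU, hD, hA⟩ := hα
  refine ⟨dyck_UD_cons hd, ?_, ?_, by simp⟩
  · intro i hocc
    match i with
    | 0 =>
      obtain ⟨t, ht⟩ := hocc
      simp [pUUU] at ht
    | 1 =>
      obtain ⟨t, ht⟩ := hocc
      simp [pUUU] at ht
    | (i+2) => exact hU i (occ_cons2.1 hocc)
  · intro i hocc
    match i with
    | 0 =>
      obtain ⟨t, ht⟩ := hocc
      simp [pDUD] at ht
    | 1 =>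
      -- pat = [-1,1,-1] <+: -1 :: α' forces α' to start with [1,-1]
      have h2 : ([1, -1] : List ℤ) <+: α' := by
        have h3 : pDUD <+: (-1:ℤ) :: α' := hocc
        exact (List.cons_prefix_cons.1 h3).2
      rcases hA with rfl | hA
      · have := h2.length_le
        simp at this
      · have hlen3 : 3 ≤ α'.length := by
          have := hA.length_le
          simpa [pUUD] using this
        have e1 := hA.getElem (i := 1) (by simp [pUUD])
        have e2 := h2.getElem (i := 1) (by simp)
        simp only [pUUD] at e1
        simp only [List.getElem_cons_succ, List.getElem_cons_zero] at e1 e2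
        omega
    | (i+2) => exact hD i (occ_cons2.1 hocc)


/-- first-return decomposition of a nonempty K-word -/
lemma exists_decomp {w : List ℤ} (hw : PK w) (hne : w ≠ []) :
    ∃ α β, w = (1:ℤ) :: α ++ (-1:ℤ) :: β ∧ PB α ∧ PK β := by
  obtain ⟨⟨hs, hn, hz⟩, hU, hD, hUD⟩ := hw
  obtain ⟨t, rfl⟩ := head_eq_one ⟨hs, hn, hz⟩ hne
  set w := (1:ℤ) :: t with hw_def
  have hlen2 : 2 ≤ w.length := by
    obtain ⟨m, hm⟩ := even_length hs hz
    have : w.length ≠ 0 := by simp [hw_def]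
    omega
  have hex : ∃ j, j + 2 ≤ w.length ∧ (w.take (j+2)).sum = 0 := by
    refine ⟨w.length - 2, by omega, ?_⟩
    rw [List.take_of_length_le (by omega)]
    exact hz
  classical
  let j := Nat.find hex
  obtain ⟨hj2, hs0⟩ : j + 2 ≤ w.length ∧ (w.take (j+2)).sum = 0 := Nat.find_spec hex
  have hmin : ∀ q, q < j → ¬(q + 2 ≤ w.length ∧ (w.take (q+2)).sum = 0) :=
    fun q hq => Nat.find_min hex hq
  -- intermediate prefixes have positive sum
  have hpos : ∀ p, 1 ≤ p → p ≤ j + 1 → 1 ≤ (w.take p).sum := by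
    intro p h1 h2
    have hnn := nonneg_iff.1 hn p
    by_contra hlt
    push_neg at hlt
    have hps : (w.take p).sum = 0 := by omega
    have hsteps : ∀ s ∈ w.take p, s = 1 ∨ s = -1 := fun s hs' =>
      hs s (List.mem_of_mem_take hs')
    obtain ⟨m, hm⟩ := even_length hsteps hps
    have hplen : (w.take p).length = p := by
      rw [List.length_take]
      omega
    have hp2 : 2 ≤ p := by omega
    exact hmin (p - 2) (by omega) ⟨by omega, by rw [show p - 2 + 2 = p by omega]; exact hps⟩
  -- the step at position j+1 is -1
  have hjb : j + 1 < w.length := by omega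
  have hstep : w[j+1] = -1 := by
    have hsucc := List.sum_take_succ w (j+1) hjb
    have := hpos (j+1) (by omega) (by omega)
    rw [show j + 1 + 1 = j + 2 by omega] at hsucc
    rcases hs _ (List.getElem_mem hjb) with he | he
    · omega
    · exact he
  set α := t.take j with hα_def
  set β := w.drop (j+2) with hβ_def
  have hαlen : α.length = j := by
    rw [hα_def, List.length_take]
    have : w.length = t.length + 1 := by rw [hw_def]; simp
    omega
  have hshape : w = (1:ℤ) :: α ++ (-1:ℤ) :: β := by
    rw [hβ_def, hα_def]
    conv_lhs => rw [← List.take_append_drop (j+1) w]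
    rw [List.drop_eq_getElem_cons hjb, hstep]
    rw [hw_def, List.take_succ_cons]
  have hα_steps : ∀ s ∈ α, s = 1 ∨ s = -1 := by
    intro s hs'
    refine hs s ?_
    rw [hw_def]
    exact List.mem_cons_of_mem _ (List.mem_of_mem_take (hα_def ▸ hs'))
  have hα_sum : α.sum = 0 := by
    have h1 : w.take (j+1) = 1 :: α := by rw [hw_def, List.take_succ_cons, ← hα_def]
    have hsucc := List.sum_take_succ w (j+1) hjb
    rw [show j+1+1 = j+2 by omega, hs0, h1, hstep, List.sum_cons] at hsucc
    omega
  have hα_nonneg : NonnegPrefixes α := by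
    rw [nonneg_iff]
    intro q
    rcases le_or_gt q j with hq | hq
    · have h2 : α.take q = t.take q := by
        rw [hα_def, List.take_take, min_eq_left hq]
      have h3 := hpos (q+1) (by omega) (by omega)
      rw [hw_def, List.take_succ_cons, List.sum_cons] at h3
      rw [h2]
      omega
    · rw [List.take_of_length_le (by omega), hα_sum]
  have hα_dyck : IsDyckWord α := ⟨hα_steps, hα_nonneg, hα_sum⟩
  have hsumr : ∀ q, (w.take (α.length + 2 + q)).sum = (β.take q).sum := by
    intro q
    conv_lhs => rw [hshape]
    exact sum_take_right α β hα_sum q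
  have hαU : Avoids pUUU α := by
    intro i hocc
    have hl := hocc.length_le
    simp only [List.length_drop] at hl
    have hl3 : i + 3 ≤ α.length := by
      have : pUUU.length = 3 := rfl
      omega
    have hw' := occ_mem_mid (β := β) hocc
    rw [← hshape] at hw'
    have hle := hU _ hw'
    have := hpos (i+1) (by omega) (by omega)
    omega
  have hαD : Avoids pDUD α := by
    intro i hocc
    have hl := hocc.length_le
    simp only [List.length_drop] at hl
    have hl3 : i + 3 ≤ α.length := by
      have : pDUD.length = 3 := rfl
      omega
    have hw' := occ_mem_mid (β := β) hocc
    rw [← hshape] at hw'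
    have hle := hD _ hw'
    have := hpos (i+1) (by omega) (by omega)
    omega
  have hαne : α ≠ [] := by
    intro h
    have hocc : OccursAt pUD w 0 := by
      unfold OccursAt
      rw [List.drop_zero, hshape, h]
      exact ⟨β, rfl⟩
    have := hUD 0 hocc
    simp at this
  have hβ_dyck : IsDyckWord β := by
    refine ⟨?_, ?_, ?_⟩
    · intro s hs'
      exact hs s (List.mem_of_mem_drop (hβ_def ▸ hs'))
    · rw [nonneg_iff]
      intro q
      rw [← hsumr q]
      exact nonneg_iff.1 hn _
    · have h := List.sum_take_add_sum_drop w (j+2)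
      rw [hs0, hz, ← hβ_def] at h
      omega
  have hβU : AvoidsAtPosHeight pUUU β := by
    intro i hocc
    have hw' := occ_mem_right (α := α) hocc
    rw [← hshape] at hw'
    have := hU _ hw'
    rwa [hsumr i] at this
  have hβD : AvoidsAtPosHeight pDUD β := by
    intro i hocc
    have hw' := occ_mem_right (α := α) hocc
    rw [← hshape] at hw'
    have := hD _ hw'
    rwa [hsumr i] at this
  have hβUD : ∀ i, OccursAt pUD β i → (β.take i).sum ≠ 0 := by
    intro i hocc h0
    have hw' := occ_mem_right (α := α) hocc
    rw [← hshape] at hw'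
    exact (hUD _ hw') (by rw [hsumr i]; exact h0)
  exact ⟨α, β, hshape, ⟨hα_dyck, hαU, hαD, hαne⟩, ⟨hβ_dyck, hβU, hβD, hβUD⟩⟩

/-- uniqueness of the first-return decomposition -/
lemma decomp_unique {α β α' β' : List ℤ} (hα : IsDyckWord α) (hα' : IsDyckWord α')
    (h : (1:ℤ) :: α ++ (-1:ℤ) :: β = (1:ℤ) :: α' ++ (-1:ℤ) :: β') : α = α' ∧ β = β' := by
  have key : ∀ (a b : List ℤ) (c d : List ℤ), IsDyckWord a → IsDyckWord b →
      a.length ≤ b.length → a ++ (-1:ℤ) :: c = b ++ (-1:ℤ) :: d → a = b ∧ c = d := by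
    intro a b c d ha hb hle habcd
    rcases eq_or_lt_of_le hle with heq | hlt
    · obtain ⟨h1, h2⟩ := List.append_inj habcd heq
      exact ⟨h1, by injection h2⟩
    · exfalso
      have hpre : (a ++ [(-1:ℤ)]) <+: b := by
        have h1 : (a ++ [(-1:ℤ)]) <+: a ++ (-1:ℤ) :: c := by
          rw [show a ++ (-1:ℤ) :: c = (a ++ [(-1:ℤ)]) ++ c by simp]
          exact List.prefix_append _ _
        have h2 : b <+: a ++ (-1:ℤ) :: c := by
          rw [habcd]
          exact List.prefix_append _ _
        exact List.prefix_of_prefix_length_le h1 h2 (by simp; omega)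
      have := hb.2.1 _ ((List.mem_inits _ _).2 hpre)
      rw [List.sum_append, ha.2.2] at this
      simp at this
  have h0 : α ++ (-1:ℤ) :: β = α' ++ (-1:ℤ) :: β' := by
    rw [List.cons_append, List.cons_append] at h
    injection h
  rcases le_total α.length α'.length with hle | hle
  · exact key α α' β β' hα hα' hle h0
  · obtain ⟨h1, h2⟩ := key α' α β' β hα' hα hle h0.symm
    exact ⟨h1.symm, h2.symm⟩


abbrev KT (n : ℕ) := {w : List ℤ // IsDyckWord w ∧ w.length = 2 * n ∧
  AvoidsAtPosHeight pUUU w ∧ AvoidsAtPosHeight pDUD w ∧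
  ∀ i, OccursAt pUD w i → (w.take i).sum ≠ 0}

abbrev AT (n : ℕ) := {w : List ℤ // IsDyckWord w ∧ w.length = 2 * n ∧
  Avoids pUUU w ∧ Avoids pDUD w ∧ (w = [] ∨ pUUD <+: w)}

lemma list_finite_aux (m : ℕ) (P : List ℤ → Prop)
    (hP : ∀ w, P w → (∀ s ∈ w, s = 1 ∨ s = -1) ∧ w.length = m) :
    Finite {w : List ℤ // P w} := by
  apply Finite.of_injective (β := Fin m → Bool)
    (f := fun w => fun i => decide (w.1.getD i 0 = 1))
  rintro ⟨w, hw⟩ ⟨w', hw'⟩ hff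
  obtain ⟨hsw, hlw⟩ := hP w hw
  obtain ⟨hsw', hlw'⟩ := hP w' hw'
  simp only [Subtype.mk_eq_mk]
  apply List.ext_getElem (by omega)
  intro i h1 h2
  have := congrFun hff ⟨i, by omega⟩
  simp only [decide_eq_decide] at this
  rw [List.getD_eq_getElem _ _ h1, List.getD_eq_getElem _ _ h2] at this
  rcases hsw _ (List.getElem_mem h1) with he | he <;>
    rcases hsw' _ (List.getElem_mem h2) with he' | he' <;> omega

instance KT_finite (n : ℕ) : Finite (KT n) :=
  list_finite_aux (2*n) _ (fun w hw => ⟨hw.1.1, hw.2.1⟩)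

instance AT_finite (n : ℕ) : Finite (AT n) :=
  list_finite_aux (2*n) _ (fun w hw => ⟨hw.1.1, hw.2.1⟩)

lemma no_occ_nil {p : List ℤ} (hp : p ≠ []) (i : ℕ) : ¬ OccursAt p ([] : List ℤ) i := by
  intro h
  unfold OccursAt at h
  rw [List.drop_nil] at h
  exact hp (List.prefix_nil.1 h)

lemma nil_KT : IsDyckWord ([] : List ℤ) ∧ ([] : List ℤ).length = 2 * 0 ∧
    AvoidsAtPosHeight pUUU ([] : List ℤ) ∧ AvoidsAtPosHeight pDUD ([] : List ℤ) ∧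
    ∀ i, OccursAt pUD ([] : List ℤ) i → (([] : List ℤ).take i).sum ≠ 0 := by
  refine ⟨⟨by simp, ?_, by simp⟩, by simp, ?_, ?_, ?_⟩
  · intro p hp
    simp at hp
    simp [hp]
  · exact fun i h => absurd h (no_occ_nil (by simp [pUUU]) i)
  · exact fun i h => absurd h (no_occ_nil (by simp [pDUD]) i)
  · exact fun i h => absurd h (no_occ_nil (by simp [pUD]) i)

lemma nil_AT : IsDyckWord ([] : List ℤ) ∧ ([] : List ℤ).length = 2 * 0 ∧
    Avoids pUUU ([] : List ℤ) ∧ Avoids pDUD ([] : List ℤ) ∧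
    (([] : List ℤ) = [] ∨ pUUD <+: ([] : List ℤ)) := by
  refine ⟨nil_KT.1, by simp, ?_, ?_, Or.inl rfl⟩
  · exact fun i => no_occ_nil (by simp [pUUU]) i
  · exact fun i => no_occ_nil (by simp [pDUD]) i

lemma KT_zero : Nat.card (KT 0) = 1 := by
  rw [Nat.card_eq_one_iff_unique]
  constructor
  · constructor
    rintro ⟨w, hw⟩ ⟨w', hw'⟩
    have h1 : w = [] := List.length_eq_zero_iff.1 (by have := hw.2.1; omega)
    have h2 : w' = [] := List.length_eq_zero_iff.1 (by have := hw'.2.1; omega)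
    simp [h1, h2]
  · exact ⟨⟨[], nil_KT⟩⟩

lemma AT_zero : Nat.card (AT 0) = 1 := by
  rw [Nat.card_eq_one_iff_unique]
  constructor
  · constructor
    rintro ⟨w, hw⟩ ⟨w', hw'⟩
    have h1 : w = [] := List.length_eq_zero_iff.1 (by have := hw.2.1; omega)
    have h2 : w' = [] := List.length_eq_zero_iff.1 (by have := hw'.2.1; omega)
    simp [h1, h2]
  · exact ⟨⟨[], nil_AT⟩⟩






lemma KT_PK {n : ℕ} (w : KT n) : PK w.1 := ⟨w.2.1, w.2.2.2.1, w.2.2.2.2.1, w.2.2.2.2.2⟩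
lemma AT_PA {n : ℕ} (w : AT n) : PA w.1 := ⟨w.2.1, w.2.2.2.1, w.2.2.2.2.1, w.2.2.2.2.2⟩
lemma mem_KT {w : List ℤ} {n : ℕ} (h : PK w) (hl : w.length = 2*n) :
    IsDyckWord w ∧ w.length = 2 * n ∧ AvoidsAtPosHeight pUUU w ∧ AvoidsAtPosHeight pDUD w ∧
      ∀ i, OccursAt pUD w i → (w.take i).sum ≠ 0 :=
  ⟨h.1, hl, h.2.1, h.2.2.1, h.2.2.2⟩
lemma mem_AT {w : List ℤ} {n : ℕ} (h : PA w) (hl : w.length = 2*n) :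
    IsDyckWord w ∧ w.length = 2 * n ∧ Avoids pUUU w ∧ Avoids pDUD w ∧
      (w = [] ∨ pUUD <+: w) :=
  ⟨h.1, hl, h.2.1, h.2.2.1, h.2.2.2⟩

def TGT (m : ℕ) : Type :=
  ((i : Fin m) × (AT (i.1+1) × KT (m-1-i.1))) ⊕ ((i : Fin m) × (AT i.1 × KT (m-1-i.1)))

def G (m : ℕ) : TGT m → KT (m+1) := fun x =>
  match x with
  | .inl ⟨i, α, β⟩ =>
    ⟨(1:ℤ) :: α.1 ++ (-1:ℤ) :: β.1, by
      have hPB : PB α.1 := PB_of_A1 (AT_PA α)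
        (by
          have := α.2.2.1
          intro h
          rw [h] at this
          simp at this)
      refine mem_KT (compose_PK hPB (KT_PK β)) ?_
      rw [len_w, α.2.2.1, β.2.2.1]
      have := i.2
      omega⟩
  | .inr ⟨i, α, β⟩ =>
    ⟨(1:ℤ) :: ((1:ℤ) :: (-1:ℤ) :: α.1) ++ (-1:ℤ) :: β.1, by
      have hPB : PB ((1:ℤ) :: (-1:ℤ) :: α.1) := PB_of_UD (AT_PA α)
      refine mem_KT (compose_PK hPB (KT_PK β)) ?_
      rw [len_w]
      have h1 := α.2.2.1
      have h2 := β.2.2.1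
      have := i.2
      simp only [List.length_cons]
      omega⟩

lemma G_inj (m : ℕ) : Function.Injective (G m) := by
  rintro (⟨i, α, β⟩ | ⟨i, α, β⟩) (⟨i', α', β'⟩ | ⟨i', α', β'⟩) h <;>
    rw [Subtype.ext_iff] at h <;> simp only [G] at h
  · -- inl inl
    obtain ⟨hαe, hβe⟩ := decomp_unique (AT_PA α).1 (AT_PA α').1 h
    have hie : i = i' := by
      have h1 := α.2.2.1
      have h2 := α'.2.2.1
      rw [hαe] at h1
      exact Fin.ext (by omega)
    subst hie
    have : α = α' := Subtype.ext hαe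
    have hβ : β = β' := Subtype.ext hβe
    subst this; subst hβ; rfl
  · -- inl inr : impossible
    exfalso
    obtain ⟨hαe, _⟩ := decomp_unique (AT_PA α).1 (dyck_UD_cons (AT_PA α').1) h
    have hne : α.1 ≠ [] := by
      have := α.2.2.1
      intro hh
      rw [hh] at this
      simp at this
    rcases α.2.2.2.2.2 with hh | hh
    · exact hne hh
    · rw [hαe] at hh
      simp [pUUD, List.cons_prefix_cons] at hh
  · -- inr inl : impossible
    exfalso
    obtain ⟨hαe, _⟩ := decomp_unique (dyck_UD_cons (AT_PA α).1) (AT_PA α').1 h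
    have hne : α'.1 ≠ [] := by
      have := α'.2.2.1
      intro hh
      rw [hh] at this
      simp at this
    rcases α'.2.2.2.2.2 with hh | hh
    · exact hne hh
    · rw [← hαe] at hh
      simp [pUUD, List.cons_prefix_cons] at hh
  · -- inr inr
    obtain ⟨hαe, hβe⟩ := decomp_unique (dyck_UD_cons (AT_PA α).1) (dyck_UD_cons (AT_PA α').1) h
    have hαe' : α.1 = α'.1 := by
      injection hαe with _ h1
      injection h1
    have hie : i = i' := by
      have h1 := α.2.2.1
      have h2 := α'.2.2.1
      rw [hαe'] at h1
      exact Fin.ext (by omega)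
    subst hie
    have : α = α' := Subtype.ext hαe'
    have hβ : β = β' := Subtype.ext hβe
    subst this; subst hβ; rfl

lemma G_surj (m : ℕ) : Function.Surjective (G m) := by
  rintro ⟨w, hw⟩
  have hPK : PK w := ⟨hw.1, hw.2.2.1, hw.2.2.2.1, hw.2.2.2.2⟩
  have hne : w ≠ [] := by
    intro h
    have := hw.2.1
    rw [h] at this
    simp at this
  obtain ⟨α, β, hshape, hPB, hPKβ⟩ := exists_decomp hPK hne
  obtain ⟨a, ha⟩ := even_length hPB.1.1 hPB.1.2.2
  obtain ⟨b, hb⟩ := even_length hPKβ.1.1 hPKβ.1.2.2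
  have hlw : w.length = 2 * (m+1) := hw.2.1
  have hlen : α.length + β.length + 2 = 2 * (m + 1) := by
    rw [hshape, len_w] at hlw
    omega
  have hane : α ≠ [] := hPB.2.2.2
  have hapos : 1 ≤ a := by
    have : α.length ≠ 0 := fun hh => hane (List.length_eq_zero_iff.1 hh)
    omega
  rcases PB_split hPB with hPA | ⟨α', rfl, hPA'⟩
  · -- case 1 : α ∈ A* nonempty
    refine ⟨Sum.inl ⟨⟨a - 1, by omega⟩, ⟨α, mem_AT hPA (by simp only [Fin.val_mk]; omega)⟩,
      ⟨β, mem_KT hPKβ (by simp only [Fin.val_mk]; omega)⟩⟩, ?_⟩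
    apply Subtype.ext
    exact hshape.symm
  · -- case 2 : α = U D α'
    have ha' : α'.length = 2 * (a - 1) := by
      simp only [List.length_cons] at ha
      omega
    refine ⟨Sum.inr ⟨⟨a - 1, by omega⟩, ⟨α', mem_AT hPA' (by simp only [Fin.val_mk]; omega)⟩,
      ⟨β, mem_KT hPKβ (by simp only [Fin.val_mk]; omega)⟩⟩, ?_⟩
    apply Subtype.ext
    exact hshape.symm

lemma card_rec (m : ℕ) :
    Nat.card (KT (m+1)) =
      (∑ i ∈ Finset.range m, Nat.card (AT (i+1)) * Nat.card (KT (m-1-i))) +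
      ∑ i ∈ Finset.range m, Nat.card (AT i) * Nat.card (KT (m-1-i)) := by
  have e : TGT m ≃ KT (m+1) := Equiv.ofBijective (G m) ⟨G_inj m, G_surj m⟩
  rw [← Nat.card_congr e]
  unfold TGT
  letI : ∀ (n : ℕ), Fintype (AT n) := fun n => Fintype.ofFinite _
  letI : ∀ (n : ℕ), Fintype (KT n) := fun n => Fintype.ofFinite _
  rw [Nat.card_sum]
  congr 1
  · rw [Nat.card_eq_fintype_card, Fintype.card_sigma]
    rw [← Fin.sum_univ_eq_sum_range (fun i => Nat.card (AT (i+1)) * Nat.card (KT (m-1-i)))]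
    congr 1
    funext i
    rw [Nat.card_eq_fintype_card, Fintype.card_prod]
    simp [Nat.card_eq_fintype_card]
  · rw [Nat.card_eq_fintype_card, Fintype.card_sigma]
    rw [← Fin.sum_univ_eq_sum_range (fun i => Nat.card (AT i) * Nat.card (KT (m-1-i)))]
    congr 1
    funext i
    rw [Nat.card_eq_fintype_card, Fintype.card_prod]
    simp [Nat.card_eq_fintype_card]


end Stmt9

open PowerSeries in
/-- The generating function K(x) of Dyck paths avoiding UUU and DUD at height h > 0
with no occurrence of the factor UD at height 0 satisfies
K(x) = 1 + x(A*(x) - 1 + x A*(x)) K(x). -/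
theorem stmt_9 (K A : PowerSeries ℚ)
    (hK : ∀ n : ℕ, (PowerSeries.coeff n) K =
      Nat.card {w : List ℤ // IsDyckWord w ∧ w.length = 2 * n ∧
        AvoidsAtPosHeight pUUU w ∧ AvoidsAtPosHeight pDUD w ∧
        ∀ i, OccursAt pUD w i → (w.take i).sum ≠ 0})
    (hA : ∀ n : ℕ, (PowerSeries.coeff n) A =
      Nat.card {w : List ℤ // IsDyckWord w ∧ w.length = 2 * n ∧
        Avoids pUUU w ∧ Avoids pDUD w ∧ (w = [] ∨ pUUD <+: w)}) :
    K = 1 + X * (A - 1 + X * A) * K := by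
  classical
  set g : ℕ → ℚ := fun n => (Nat.card (Stmt9.KT n) : ℚ) with hg
  set f : ℕ → ℚ := fun n => (Nat.card (Stmt9.AT n) : ℚ) with hf
  have hK' : ∀ n, (PowerSeries.coeff n) K = g n := hK
  have hA' : ∀ n, (PowerSeries.coeff n) A = f n := hA
  have hf0 : f 0 = 1 := by rw [hf]; simp [Stmt9.AT_zero]
  have hg0 : g 0 = 1 := by rw [hg]; simp [Stmt9.KT_zero]
  have hrec : ∀ m, g (m+1) =
      (∑ i ∈ Finset.range m, f (i+1) * g (m-1-i)) +
      ∑ i ∈ Finset.range m, f i * g (m-1-i) := by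
    intro m
    rw [hg, hf]
    simp only []
    rw [Stmt9.card_rec m]
    push_cast
    rfl
  apply PowerSeries.ext
  intro n
  rw [hK' n, map_add, PowerSeries.coeff_one]
  cases n with
  | zero =>
    rw [hg0]
    have : (PowerSeries.coeff 0) (X * (A - 1 + X * A) * K) = 0 := by
      rw [PowerSeries.coeff_zero_eq_constantCoeff, map_mul, map_mul]
      simp
    rw [this]
    simp
  | succ m =>
    rw [if_neg (Nat.succ_ne_zero m), zero_add]
    rw [mul_assoc, PowerSeries.coeff_succ_X_mul]
    have hsplit : (A - 1 + X * A) * K = (A - 1) * K + X * (A * K) := by ring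
    rw [hsplit, map_add]
    -- first summand
    have h1 : (PowerSeries.coeff m) ((A - 1) * K) =
        ∑ i ∈ Finset.range m, f (i+1) * g (m-1-i) := by
      rw [PowerSeries.coeff_mul]
      rw [Finset.Nat.sum_antidiagonal_eq_sum_range_succ_mk]
      have hterm : ∀ p ∈ Finset.range (m+1),
          (PowerSeries.coeff p) (A - 1) * (PowerSeries.coeff (m - p)) K =
          f p * g (m - p) - (if p = 0 then 1 else 0) * g (m - p) := by
        intro p _
        rw [map_sub, PowerSeries.coeff_one, hA', hK']
        ring
      rw [Finset.sum_congr rfl hterm, Finset.sum_sub_distrib]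
      have h2 : ∑ p ∈ Finset.range (m+1), (if p = 0 then (1:ℚ) else 0) * g (m - p)
          = g m := by
        rw [Finset.sum_eq_single 0]
        · simp
        · intro b _ hb
          simp [hb]
        · intro h
          exact absurd (Finset.mem_range.2 (by omega)) h
      rw [h2, Finset.sum_range_succ']
      have h3 : ∀ i ∈ Finset.range m, f (i+1) * g (m - (i+1)) = f (i+1) * g (m-1-i) := by
        intro i _
        congr 2
        omega
      rw [Finset.sum_congr rfl h3, hf0]
      simp only [Nat.sub_zero]
      ring
    rw [hrec m, h1]
    -- second summand
    congr 1
    cases m with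
    | zero =>
      rw [PowerSeries.coeff_zero_eq_constantCoeff, map_mul]
      simp
    | succ q =>
      rw [PowerSeries.coeff_succ_X_mul, PowerSeries.coeff_mul,
        Finset.Nat.sum_antidiagonal_eq_sum_range_succ_mk]
      apply Finset.sum_congr rfl
      intro p _
      rw [hA', hK']
      simp
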